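/- arXiv:2404.15065 — 2 statements merged into one kernel-verified Lean document; each statement's English description precedes it below -/
import Mathlib

section
/- Let M₁ = {C₁ + Σᵢ (Πₖ αₖ^{E₁(k,i)}) G₁ᵢ : αₖ ∈ [-1,1]} ⊂ ℝ^{n×k} and M₂ = {C₂ + Σⱼ (Πₖ αₖ^{E₂(k,j)}) G₂ⱼ : αₖ ∈ [-1,1]} ⊂ ℝ^{k×m} be matrix polynomial zonotopes sharing the same dependent factors α. Then the set {M₁M₂ : M₁ ∈ M₁, M₂ ∈ M₂ evaluated at the same α} equals the matrix polynomial zonotope with center C₁C₂, generators G₁ᵢC₂ (exponents E₁(·,i)), C₁G₂ⱼ (exponents E₂(·,j)), and G₁ᵢG₂ⱼ (exponents E₁(·,i) + E₂(·,j)). -/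
open scoped BigOperators

/-- A matrix polynomial zonotope: the set of matrices C + Σᵢ (Πₖ αₖ^{E i k}) Gᵢ
for dependent factors α ∈ [-1,1]^p. -/
def MatPolyZono {n m p : ℕ} {ι : Type*} [Fintype ι] (C : Matrix (Fin n) (Fin m) ℝ)
    (G : ι → Matrix (Fin n) (Fin m) ℝ) (E : ι → Fin p → ℕ) :
    Set (Matrix (Fin n) (Fin m) ℝ) :=
  { M | ∃ α : Fin p → ℝ, (∀ k, α k ∈ Set.Icc (-1:ℝ) 1) ∧
      M = C + ∑ i, (∏ k, α k ^ E i k) • G i }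

theorem mpz_key {n k m p h₁ h₂ : ℕ}
    (C₁ : Matrix (Fin n) (Fin k) ℝ) (G₁ : Fin h₁ → Matrix (Fin n) (Fin k) ℝ)
    (E₁ : Fin h₁ → Fin p → ℕ)
    (C₂ : Matrix (Fin k) (Fin m) ℝ) (G₂ : Fin h₂ → Matrix (Fin k) (Fin m) ℝ)
    (E₂ : Fin h₂ → Fin p → ℕ) (α : Fin p → ℝ) :
    (C₁ + ∑ i, (∏ j, α j ^ E₁ i j) • G₁ i) *
        (C₂ + ∑ i, (∏ j, α j ^ E₂ i j) • G₂ i)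
    = (C₁ * C₂) + ∑ i : Fin h₁ ⊕ Fin h₂ ⊕ Fin h₁ × Fin h₂, (∏ j, α j ^
        (Sum.elim E₁ (Sum.elim E₂ (fun q : Fin h₁ × Fin h₂ => E₁ q.1 + E₂ q.2))) i j) •
        (Sum.elim (fun i₁ => G₁ i₁ * C₂)
          (Sum.elim (fun i₂ => C₁ * G₂ i₂)
            (fun q : Fin h₁ × Fin h₂ => G₁ q.1 * G₂ q.2))) i := by
  simp only [Fintype.sum_sum_type, Fintype.sum_prod_type, Sum.elim_inl, Sum.elim_inr,
    Matrix.add_mul, Matrix.mul_add, Matrix.sum_mul, Matrix.mul_sum, Matrix.smul_mul,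
    Matrix.mul_smul, smul_smul, Pi.add_apply, pow_add, Finset.prod_mul_distrib,
    smul_add, Finset.smul_sum]
  rw [Finset.sum_comm]
  simp only [mul_comm, Finset.sum_add_distrib]
  abel

/-- The dependency-preserving product of two matrix polynomial zonotopes sharing
the same dependent factors equals the matrix polynomial zonotope with center
C₁C₂ and generators G₁ᵢC₂ (exponents E₁(·,i)), C₁G₂ⱼ (exponents E₂(·,j)), and
G₁ᵢG₂ⱼ (exponents E₁(·,i) + E₂(·,j)). -/
theorem stmt_4 (n k m p h₁ h₂ : ℕ)
    (C₁ : Matrix (Fin n) (Fin k) ℝ) (G₁ : Fin h₁ → Matrix (Fin n) (Fin k) ℝ)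
    (E₁ : Fin h₁ → Fin p → ℕ)
    (C₂ : Matrix (Fin k) (Fin m) ℝ) (G₂ : Fin h₂ → Matrix (Fin k) (Fin m) ℝ)
    (E₂ : Fin h₂ → Fin p → ℕ) :
    { M : Matrix (Fin n) (Fin m) ℝ | ∃ α : Fin p → ℝ,
        (∀ j, α j ∈ Set.Icc (-1:ℝ) 1) ∧
        M = (C₁ + ∑ i, (∏ j, α j ^ E₁ i j) • G₁ i) *
            (C₂ + ∑ i, (∏ j, α j ^ E₂ i j) • G₂ i) }
    = MatPolyZono (C₁ * C₂)
        (Sum.elim (fun i₁ => G₁ i₁ * C₂)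
          (Sum.elim (fun i₂ => C₁ * G₂ i₂)
            (fun q : Fin h₁ × Fin h₂ => G₁ q.1 * G₂ q.2)))
        (Sum.elim E₁
          (Sum.elim E₂ (fun q : Fin h₁ × Fin h₂ => E₁ q.1 + E₂ q.2))) := by
  ext M
  simp only [MatPolyZono, Set.mem_setOf_eq]
  constructor
  · rintro ⟨α, hα, rfl⟩
    exact ⟨α, hα, (mpz_key C₁ G₁ E₁ C₂ G₂ E₂ α)⟩
  · rintro ⟨α, hα, rfl⟩
    exact ⟨α, hα, (mpz_key C₁ G₁ E₁ C₂ G₂ E₂ α).symm⟩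
end

section
/- Let PZ₁, PZ₂ ⊂ ℝⁿ be polynomial zonotopes sharing dependent factors α ∈ [-1,1]^p, and Q ∈ ℝ^{n×n}. Then the set {x₁ᵀQx₂ : x₁ = PZ₁(α), x₂ = PZ₂(α), α ∈ [-1,1]^p} ⊂ ℝ equals the polynomial zonotope with center c₁ᵀQc₂, generators c₂ᵀQᵀG₁(·,i) with exponents E₁(·,i), c₁ᵀQG₂(·,j) with exponents E₂(·,j), and G₁(·,i)ᵀQG₂(·,j) with exponents E₁(·,i)+E₂(·,j). -/
open Matrix
open scoped BigOperators

/-- A (vector) polynomial zonotope in ℝⁿ. -/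
def PolyZono {n p : ℕ} {ι : Type*} [Fintype ι] (c : Fin n → ℝ)
    (G : ι → Fin n → ℝ) (E : ι → Fin p → ℕ) : Set (Fin n → ℝ) :=
  { x | ∃ α : Fin p → ℝ, (∀ k, α k ∈ Set.Icc (-1:ℝ) 1) ∧
      x = c + ∑ i, (∏ k, α k ^ E i k) • G i }

/-- Scalar polynomial zonotope (one-dimensional quadratic-map output). -/
def ScalarPolyZono {p : ℕ} {ι : Type*} [Fintype ι] (c : ℝ)
    (G : ι → ℝ) (E : ι → Fin p → ℕ) : Set ℝ :=
  { x | ∃ α : Fin p → ℝ, (∀ k, α k ∈ Set.Icc (-1:ℝ) 1) ∧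
      x = c + ∑ i, (∏ k, α k ^ E i k) * G i }

lemma sum_dotProduct' {ι n : Type*} [Fintype ι] [Fintype n] (f : ι → n → ℝ) (w : n → ℝ) :
    (∑ i, f i) ⬝ᵥ w = ∑ i, f i ⬝ᵥ w := by
  simp [dotProduct, Finset.sum_mul, Finset.sum_apply]
  exact Finset.sum_comm

lemma dotProduct_sum' {ι n : Type*} [Fintype ι] [Fintype n] (v : n → ℝ) (f : ι → n → ℝ) :
    v ⬝ᵥ (∑ i, f i) = ∑ i, v ⬝ᵥ f i := by
  rw [dotProduct_comm, sum_dotProduct']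
  simp [dotProduct_comm]

lemma dotProduct_mulVec_sum' {ι n m : Type*} [Fintype ι] [Fintype n] [Fintype m]
    (v : m → ℝ) (Q : Matrix m n ℝ) (f : ι → n → ℝ) :
    v ⬝ᵥ Q.mulVec (∑ i, f i) = ∑ i, v ⬝ᵥ Q.mulVec (f i) := by
  rw [show Q.mulVec (∑ i, f i) = ∑ i, Q.mulVec (f i) from map_sum Q.mulVecLin f Finset.univ,
    dotProduct_sum']

lemma quad_expand (n h₁ h₂ : ℕ) (Q : Matrix (Fin n) (Fin n) ℝ)
    (c₁ : Fin n → ℝ) (G₁ : Fin h₁ → Fin n → ℝ) (a : Fin h₁ → ℝ)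
    (c₂ : Fin n → ℝ) (G₂ : Fin h₂ → Fin n → ℝ) (b : Fin h₂ → ℝ) :
    (c₁ + ∑ i, a i • G₁ i) ⬝ᵥ Q.mulVec (c₂ + ∑ j, b j • G₂ j)
    = c₁ ⬝ᵥ Q.mulVec c₂ + (∑ i, a i * (G₁ i ⬝ᵥ Q.mulVec c₂)
      + (∑ j, b j * (c₁ ⬝ᵥ Q.mulVec (G₂ j))
      + ∑ i, ∑ j, (a i * b j) * (G₁ i ⬝ᵥ Q.mulVec (G₂ j)))) := by
  simp only [mulVec_add, dotProduct_add, add_dotProduct, sum_dotProduct',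
    dotProduct_mulVec_sum', mulVec_smul, dotProduct_smul, smul_dotProduct,
    smul_eq_mul, smul_smul, Finset.mul_sum]
  rw [Finset.sum_comm (s := Finset.univ) (t := Finset.univ)
    (f := fun x y => b x * (a y * (G₁ y ⬝ᵥ Q.mulVec (G₂ x))))]
  rw [show (∑ x : Fin h₁, ∑ y : Fin h₂, b y * (a x * (G₁ x ⬝ᵥ Q.mulVec (G₂ y))))
      = ∑ i, ∑ j, (a i * b j) * (G₁ i ⬝ᵥ Q.mulVec (G₂ j)) from
    Finset.sum_congr rfl fun i _ => Finset.sum_congr rfl fun j _ => by ring]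
  ring

/-- The dependency-preserving scalar quadratic map of two polynomial zonotopes
equals the polynomial zonotope with center c₁ᵀQc₂, generators c₂ᵀQᵀG₁ᵢ
(exponents E₁(·,i)), c₁ᵀQG₂ⱼ (exponents E₂(·,j)), and G₁ᵢᵀQG₂ⱼ (exponents
E₁(·,i)+E₂(·,j)). -/
theorem stmt_6 (n p h₁ h₂ : ℕ) (Q : Matrix (Fin n) (Fin n) ℝ)
    (c₁ : Fin n → ℝ) (G₁ : Fin h₁ → Fin n → ℝ) (E₁ : Fin h₁ → Fin p → ℕ)
    (c₂ : Fin n → ℝ) (G₂ : Fin h₂ → Fin n → ℝ) (E₂ : Fin h₂ → Fin p → ℕ) :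
    { r : ℝ | ∃ α : Fin p → ℝ, (∀ k, α k ∈ Set.Icc (-1:ℝ) 1) ∧
        r = (c₁ + ∑ i, (∏ k, α k ^ E₁ i k) • G₁ i) ⬝ᵥ
            Q.mulVec (c₂ + ∑ i, (∏ k, α k ^ E₂ i k) • G₂ i) }
    = ScalarPolyZono (c₁ ⬝ᵥ Q.mulVec c₂)
        (Sum.elim (fun i₁ => G₁ i₁ ⬝ᵥ Q.mulVec c₂)
          (Sum.elim (fun i₂ => c₁ ⬝ᵥ Q.mulVec (G₂ i₂))
            (fun q : Fin h₁ × Fin h₂ => G₁ q.1 ⬝ᵥ Q.mulVec (G₂ q.2))))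
        (Sum.elim E₁
          (Sum.elim E₂ (fun q : Fin h₁ × Fin h₂ => E₁ q.1 + E₂ q.2))) := by
  ext r
  simp only [Set.mem_setOf_eq, ScalarPolyZono]
  have key : ∀ α : Fin p → ℝ,
      (c₁ + ∑ i, (∏ k, α k ^ E₁ i k) • G₁ i) ⬝ᵥ
        Q.mulVec (c₂ + ∑ i, (∏ k, α k ^ E₂ i k) • G₂ i)
      = c₁ ⬝ᵥ Q.mulVec c₂ + ∑ i,
          (∏ k, α k ^ (Sum.elim E₁ (Sum.elim E₂
            (fun q : Fin h₁ × Fin h₂ => E₁ q.1 + E₂ q.2))) i k) *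
          (Sum.elim (fun i₁ => G₁ i₁ ⬝ᵥ Q.mulVec c₂)
            (Sum.elim (fun i₂ => c₁ ⬝ᵥ Q.mulVec (G₂ i₂))
              (fun q : Fin h₁ × Fin h₂ => G₁ q.1 ⬝ᵥ Q.mulVec (G₂ q.2)))) i := by
    intro α
    rw [quad_expand]
    congr 1
    rw [Fintype.sum_sum_type, Fintype.sum_sum_type, Fintype.sum_prod_type]
    simp only [Sum.elim_inl, Sum.elim_inr, Pi.add_apply, pow_add,
      Finset.prod_mul_distrib]
  constructor
  · rintro ⟨α, hα, rfl⟩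
    exact ⟨α, hα, key α⟩
  · rintro ⟨α, hα, rfl⟩
    exact ⟨α, hα, (key α).symm⟩
end
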